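/- Let E ⊆ F be a finite Galois field extension of degree d, and let E ⊆ E' be another finite separable extension. Then there exists a divisor m of d and a decomposition F ⊗_E E' ≅ ∏_{i=0}^{m-1} F_i such that each F_i is a Galois field extension of E' of degree d/m. -/

import Mathlib

open TensorProduct Polynomial IntermediateField

/-- A decomposition of an `E'`-algebra `A` as a finite product of `m` Galois field
extensions of `E'`, each of degree `k`. -/
structure PiGaloisDecomp (E' : Type) [Field E'] (A : Type) [Ring A] [Algebra E' A]
    (k m : ℕ) where
  /-- The factor fields. -/
  F : Fin m → Type
  [fld : ∀ i, Field (F i)]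
  [alg : ∀ i, Algebra E' (F i)]
  /-- Each factor is a Galois extension of `E'`. -/
  galois : ∀ i, IsGalois E' (F i)
  /-- Each factor has degree `k` over `E'`. -/
  rank : ∀ i, Module.finrank E' (F i) = k
  /-- The `E'`-algebra isomorphism with the product of the factors. -/
  iso : A ≃ₐ[E'] ((i : Fin m) → F i)

set_option synthInstance.maxHeartbeats 800000 in
set_option maxHeartbeats 1600000 in
/-- **Splitting of a Galois extension after a separable base change.**
Let `F/E` be a finite Galois extension of degree `d`, and let `E'/E` be a finite separable
extension.  Then there is a divisor `m` of `d` and a decomposition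
`F ⊗_E E' ≅ ∏_{i=0}^{m-1} F_i` such that each `F_i` is a Galois field extension of `E'`
of degree `d/m`. -/
theorem tensorProduct_galois_decomposition
    (E F E' : Type) [Field E] [Field F] [Field E']
    [Algebra E F] [FiniteDimensional E F] [IsGalois E F]
    [Algebra E E'] [FiniteDimensional E E'] [Algebra.IsSeparable E E'] :
    ∃ m : ℕ, m ∣ Module.finrank E F ∧
      Nonempty (PiGaloisDecomp E' (E' ⊗[E] F) (Module.finrank E F / m) m) := by
  classical
  obtain ⟨θ, hθ⟩ := Field.exists_primitive_element E F
  have hθint : IsIntegral E θ := Algebra.IsIntegral.isIntegral θ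
  have hadj : Algebra.adjoin E {θ} = ⊤ := by
    have := IntermediateField.adjoin_simple_toSubalgebra_of_isAlgebraic hθint.isAlgebraic
    rw [hθ] at this
    rw [← this]
    rfl
  set p := minpoly E θ with hp
  have hpsep : p.Separable := Algebra.IsSeparable.isSeparable E θ
  have hpmonic : p.Monic := minpoly.monic hθint
  have hsplits : Splits (p.map (algebraMap E F)) := Normal.splits inferInstance θ
  set g : E'[X] := p.map (algebraMap E E') with hg
  have hgmonic : g.Monic := hpmonic.map _
  have hgsep : g.Separable := hpsep.map
  set A := E' ⊗[E] F with hA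
  -- generated by 1 ⊗ θ
  have hgen : Algebra.adjoin E' {((1:E') ⊗ₜ[E] θ : A)} = ⊤ := by
    rw [eq_top_iff]
    rintro x -
    induction x using TensorProduct.induction_on with
    | zero => exact zero_mem _
    | add x y hx hy => exact add_mem hx hy
    | tmul c f =>
      have h1 : ((1:E') ⊗ₜ[E] f : A) ∈ Algebra.adjoin E' {((1:E') ⊗ₜ[E] θ : A)} := by
        have hf : ((1:E') ⊗ₜ[E] f : A) ∈ (Algebra.adjoin E {θ}).map
            (Algebra.TensorProduct.includeRight (R := E) (A := E') (B := F)) :=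
          ⟨f, by rw [hadj]; trivial, rfl⟩
        rw [AlgHom.map_adjoin] at hf
        simp only [Set.image_singleton] at hf
        have hle : Algebra.adjoin E {((1:E') ⊗ₜ[E] θ : A)} ≤
            (Algebra.adjoin E' {((1:E') ⊗ₜ[E] θ : A)}).restrictScalars E :=
          Algebra.adjoin_le (Algebra.subset_adjoin)
        exact hle hf
      have h2 : (c ⊗ₜ[E] f : A) = c • ((1:E') ⊗ₜ[E] f) := by
        rw [TensorProduct.smul_tmul', smul_eq_mul, mul_one]
      rw [h2]
      exact Subalgebra.smul_mem _ h1 c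
  -- 1 ⊗ θ is a root of g
  have hroot : aeval ((1:E') ⊗ₜ[E] θ : A) g = 0 := by
    rw [hg, aeval_map_algebraMap]
    have := aeval_algHom_apply (Algebra.TensorProduct.includeRight (R := E) (A := E') (B := F)) θ p
    rw [minpoly.aeval, map_zero] at this
    exact this
  -- the algebra iso AdjoinRoot g ≃ A
  have hg0 : g ≠ 0 := hgmonic.ne_zero
  let φ : AdjoinRoot g →ₐ[E'] A := AdjoinRoot.liftAlgHom g (Algebra.ofId E' A) ((1:E') ⊗ₜ[E] θ) hroot
  have hφsurj : Function.Surjective φ := by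
    rw [← AlgHom.range_eq_top, eq_top_iff, ← hgen, Algebra.adjoin_le_iff,
      Set.singleton_subset_iff]
    exact ⟨AdjoinRoot.root g, AdjoinRoot.lift_root hroot⟩
  haveI : FiniteDimensional E' (AdjoinRoot g) := PowerBasis.finite (AdjoinRoot.powerBasis hg0)
  have hrkAR : Module.finrank E' (AdjoinRoot g) = g.natDegree := by
    rw [PowerBasis.finrank (AdjoinRoot.powerBasis hg0), AdjoinRoot.powerBasis_dim]
  have hrkA : Module.finrank E' A = Module.finrank E F := Module.finrank_baseChange
  have hdeg : Module.finrank E F = p.natDegree := by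
    have h1 : Module.finrank E E⟮θ⟯ = p.natDegree := IntermediateField.adjoin.finrank hθint
    rw [hθ] at h1
    rw [← h1]
    exact (IntermediateField.topEquiv (F := E) (E := F)).symm.toLinearEquiv.finrank_eq
  have hrk : Module.finrank E' (AdjoinRoot g) = Module.finrank E' A := by
    rw [hrkAR, hrkA, hdeg, hg, natDegree_map]
  have hφinj : Function.Injective φ :=
    (LinearMap.injective_iff_surjective_of_finrank_eq_finrank (f := φ.toLinearMap) hrk).mpr hφsurj
  let ψ : AdjoinRoot g ≃ₐ[E'] A := AlgEquiv.ofBijective φ ⟨hφinj, hφsurj⟩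
  haveI : IsReduced (AdjoinRoot g) := by
    have : (Ideal.span {g}).IsRadical := isRadical_iff_span_singleton.mp hgsep.squarefree.isRadical
    exact (Ideal.isRadical_iff_quotient_reduced _).mp this
  haveI : IsReduced A := isReduced_of_injective (ψ.symm : A →+* AdjoinRoot g) ψ.symm.injective
  haveI : IsArtinianRing A := isArtinian_of_tower E' inferInstance
  -- the maximal ideals
  haveI := (IsArtinianRing.setOfPred_isMaximal_finite A).to_subtype
  haveI : Fintype {I : Ideal A | I.IsMaximal} := Fintype.ofFinite _
  set S := {I : Ideal A | I.IsMaximal} with hS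
  letI K : S → Type := fun I => A ⧸ I.1
  letI : ∀ I : S, Field (K I) := fun I => @Ideal.Quotient.field A _ I.1 I.2
  letI : ∀ I : S, Algebra E' (K I) := fun I => Ideal.Quotient.algebra E'
  -- each quotient is a splitting field of g over E'
  have hsf : ∀ I : S, IsSplittingField E' (K I) g := by
    intro I
    letI π : A →ₐ[E'] K I := Ideal.Quotient.mkₐ E' I.1
    have hπsurj : Function.Surjective π := Ideal.Quotient.mk_surjective
    constructor
    · -- splits
      rw [hg, Polynomial.map_map]
      have h1 : ((algebraMap E' (K I)).comp (algebraMap E E')) =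
          (π.toRingHom.comp
            (Algebra.TensorProduct.includeRight (R := E) (A := E') (B := F)).toRingHom).comp
            (algebraMap E F) := by
        ext e
        show algebraMap E' (K I) (algebraMap E E' e) = π ((1:E') ⊗ₜ[E] (algebraMap E F e))
        have : ((algebraMap E E' e) ⊗ₜ[E] (1:F) : A) = (1:E') ⊗ₜ[E] (algebraMap E F e) := by
          rw [Algebra.algebraMap_eq_smul_one, Algebra.algebraMap_eq_smul_one,
            TensorProduct.smul_tmul]
        rw [← this]
        rfl
      rw [h1, ← Polynomial.map_map]
      exact hsplits.map _
    · -- adjoin roots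
      have hmem : π ((1:E') ⊗ₜ[E] θ) ∈ g.rootSet (K I) := by
        rw [mem_rootSet]
        refine ⟨hg0, ?_⟩
        rw [aeval_algHom_apply, hroot, map_zero]
      have hgenK : Algebra.adjoin E' {π ((1:E') ⊗ₜ[E] θ)} = ⊤ := by
        have := AlgHom.map_adjoin π {((1:E') ⊗ₜ[E] θ : A)}
        rw [hgen, Set.image_singleton] at this
        rw [← this, Algebra.map_top]
        exact (AlgHom.range_eq_top π).mpr hπsurj
      rw [eq_top_iff, ← hgenK]
      exact Algebra.adjoin_mono (Set.singleton_subset_iff.mpr hmem)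
  haveI : ∀ I : S, FiniteDimensional E' (K I) := fun I =>
    haveI := hsf I
    IsSplittingField.finiteDimensional (K I) g
  set L := g.SplittingField with hL
  haveI hGal : IsGalois E' L := IsGalois.of_separable_splitting_field hgsep
  let eqv : ∀ I : S, K I ≃ₐ[E'] L := fun I =>
    haveI := hsf I
    IsSplittingField.algEquiv (K I) g
  -- the CRT algebra equivalence
  let Ψ : A →ₐ[E'] ∀ I : S, K I := Pi.algHom _ _ (fun I => Ideal.Quotient.mkₐ E' I.1)
  have hΨinj : Function.Injective Ψ := by
    rw [injective_iff_map_eq_zero]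
    intro x hx
    have hx' : x ∈ nilradical A := by
      rw [mem_nilradical, nilpotent_iff_mem_prime]
      intro J hJ
      have h2 := congrFun hx ⟨J, (IsArtinianRing.isPrime_iff_isMaximal J).mp hJ⟩
      exact Ideal.Quotient.eq_zero_iff_mem.mp h2
    rw [nilradical_eq_zero] at hx'
    exact (Submodule.mem_bot A).mp hx'
  have hΨsurj : Function.Surjective Ψ := by
    have hco : Pairwise (Function.onFun IsCoprime fun I : S => I.1) := fun I J h =>
      Ideal.isCoprime_iff_sup_eq.mpr <| I.2.coprime_of_ne J.2 <| by rwa [Ne, Subtype.coe_inj]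
    intro z
    obtain ⟨y, hy⟩ := Ideal.quotientInfToPiQuotient_surj hco z
    obtain ⟨x, rfl⟩ := Ideal.Quotient.mk_surjective y
    refine ⟨x, ?_⟩
    funext I
    have h3 := congrFun hy I
    rw [Ideal.quotientInfToPiQuotient_mk'] at h3
    exact h3
  let Φ : A ≃ₐ[E'] ∀ I : S, K I := AlgEquiv.ofBijective Ψ ⟨hΨinj, hΨsurj⟩
  let Φ2 : (∀ I : S, K I) ≃ₐ[E'] (∀ _ : S, L) := AlgEquiv.piCongrRight eqv
  set m := Fintype.card S with hm
  let e : Fin m ≃ S := (Fintype.equivFin S).symm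
  let Φ3 : (∀ _ : S, L) ≃ₐ[E'] (Fin m → L) :=
    AlgEquiv.ofAlgHom (Pi.algHom _ _ fun i => Pi.evalAlgHom E' _ (e i))
      (Pi.algHom _ _ fun I => Pi.evalAlgHom E' _ (e.symm I))
      (AlgHom.ext fun f => funext fun i => by simp)
      (AlgHom.ext fun f => funext fun I => by simp)
  have hcard : Module.finrank E F = m * Module.finrank E' L := by
    have c1 : Module.finrank E F = Module.finrank E' A := hrkA.symm
    have c2 : Module.finrank E' A = Module.finrank E' (∀ I : S, K I) :=
      Φ.toLinearEquiv.finrank_eq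
    have c3 : Module.finrank E' (∀ I : S, K I) = ∑ I : S, Module.finrank E' (K I) :=
      Module.finrank_pi_fintype E'
    have c4 : ∀ I : S, Module.finrank E' (K I) = Module.finrank E' L := fun I =>
      (eqv I).toLinearEquiv.finrank_eq
    rw [c1, c2, c3, Finset.sum_congr rfl fun I _ => c4 I, Finset.sum_const, Finset.card_univ,
      smul_eq_mul]
  have hm0 : 0 < m := by
    rcases Nat.eq_zero_or_pos m with h | h
    · exfalso
      rw [h, zero_mul] at hcard
      exact (Module.finrank_pos (R := E) (M := F)).ne' hcard
    · exact h
  have hk : Module.finrank E F / m = Module.finrank E' L := by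
    rw [hcard, Nat.mul_div_cancel_left _ hm0]
  refine ⟨m, ⟨Module.finrank E' L, hcard⟩, ⟨?_⟩⟩
  exact
    { F := fun _ => L
      fld := fun _ => inferInstance
      alg := fun _ => inferInstance
      galois := fun _ => hGal
      rank := fun _ => hk.symm
      iso := Φ.trans (Φ2.trans Φ3) }
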